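/- Suppose I is a stretched m-primary ideal. Then α_1 = ℓ_A((I^2+Q)/Q) = n_I − 1. -/

import Mathlib

open Polynomial IsLocalRing

set_option synthInstance.maxHeartbeats 1000000
set_option maxHeartbeats 1000000

noncomputable section

/-- The length `ℓ_A(M)` of an `A`-module `M`, defined as the Krull dimension of its
lattice of submodules. -/
def moduleLength (A : Type*) [CommRing A] (M : Type*) [AddCommGroup M] [Module A M] : ℕ∞ :=
  (Order.krullDim (Submodule A M)).unbotD 0

/-- `ℓ_A(M/N)` for ideals `N ⊆ M` of `A`. -/
def qlen {A : Type*} [CommRing A] (M N : Ideal A) : ℕ∞ :=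
  moduleLength A (↥M ⧸ (Submodule.comap M.subtype N))

/-- `ℓ_A(A/J)`. -/
def cyclen {A : Type*} [CommRing A] (J : Ideal A) : ℕ∞ :=
  moduleLength A (A ⧸ J)

/-- The depth of `M` with respect to the ideal `J`: the supremum of the lengths of
`M`-regular sequences consisting of elements of `J`. -/
def seqDepth {A : Type*} [CommRing A] (J : Ideal A) (M : Type*) [AddCommGroup M]
    [Module A M] : ℕ∞ :=
  sSup {n : ℕ∞ | ∃ rs : List A, (∀ r ∈ rs, r ∈ J) ∧
    RingTheory.Sequence.IsRegular M rs ∧ (rs.length : ℕ∞) = n}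

/-- The associated graded ring `G(I) = ⊕_{n ≥ 0} Iⁿ/Iⁿ⁺¹`, realized as `R(I)/I·R(I)`
where `R(I)` is the Rees algebra of `I`. -/
abbrev agr {A : Type*} [CommRing A] (I : Ideal A) : Type _ :=
  (reesAlgebra I) ⧸ (Ideal.map (algebraMap A (reesAlgebra I)) I)

/-- The irrelevant ideal `R(I)_+` of the Rees algebra, generated by the degree-one
elements `a·t`, `a ∈ I`. -/
def reesPlus {A : Type*} [CommRing A] (I : Ideal A) : Ideal (reesAlgebra I) :=
  Ideal.span {x | ∃ a ∈ I, (x : A[X]) = Polynomial.monomial 1 a}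

/-- The unique graded maximal ideal `m/I ⊕ ⊕_{n ≥ 1} Iⁿ/Iⁿ⁺¹` of the associated graded
ring `G(I)`. -/
def gMax {A : Type*} [CommRing A] (m I : Ideal A) : Ideal (agr I) :=
  Ideal.map (Ideal.Quotient.mk _) (Ideal.map (algebraMap A (reesAlgebra I)) m ⊔ reesPlus I)

/-- The index of nilpotency `n_I = min {n ≥ 0 | I^{n+1} ⊆ Q}`. -/
def nidx {A : Type*} [CommRing A] (I Q : Ideal A) : ℕ := sInf {n | I ^ (n + 1) ≤ Q}

/-- The reduction number `r_I = min {n ≥ 0 | I^{n+1} = Q·Iⁿ}`. -/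
def rnum {A : Type*} [CommRing A] (I Q : Ideal A) : ℕ := sInf {n | I ^ (n + 1) = Q * I ^ n}

/-- `I` is stretched with respect to `Q`: `Q ∩ I² = Q·I` and `ℓ_A((I²+Q)/(I³+Q)) = 1`. -/
def IsStretched {A : Type*} [CommRing A] (I Q : Ideal A) : Prop :=
  Q ⊓ I ^ 2 = Q * I ∧ qlen (I ^ 2 ⊔ Q) (I ^ 3 ⊔ Q) = 1

/-- The associated graded ring `G(I)` is Cohen-Macaulay: its depth with respect to the
graded maximal ideal equals its Krull dimension. -/
def agrCM {A : Type*} [CommRing A] (m I : Ideal A) : Prop :=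
  (seqDepth (A := agr I) (gMax m I) (agr I) : WithBot ℕ∞) = ringKrullDim (agr I)


def olen (α : Type*) [Preorder α] : ℕ∞ := (Order.krullDim α).unbotD 0

lemma length_le_olen {α : Type*} [Preorder α] (p : LTSeries α) : (p.length : ℕ∞) ≤ olen α := by
  have : Nonempty α := ⟨p.head⟩
  rw [olen, Order.krullDim_eq_iSup_length, WithBot.unbotD_coe]
  exact le_iSup (fun q : LTSeries α => (q.length : ℕ∞)) p

lemma olen_le {α : Type*} [Preorder α] {n : ℕ∞} (h : ∀ p : LTSeries α, (p.length : ℕ∞) ≤ n) :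
    olen α ≤ n := by
  by_cases hne : Nonempty α
  · rw [olen, Order.krullDim_eq_iSup_length, WithBot.unbotD_coe]
    exact iSup_le h
  · have : IsEmpty α := not_nonempty_iff.mp hne
    rw [olen, Order.krullDim_eq_bot, WithBot.unbotD_bot]
    exact zero_le

lemma height_le_olen {α : Type*} [Preorder α] (x : α) : Order.height x ≤ olen α := by
  have : Nonempty α := ⟨x⟩
  rw [olen, Order.krullDim_eq_iSup_height_of_nonempty, WithBot.unbotD_coe]
  exact le_iSup Order.height x

lemma olen_le_of_strictMono {α β : Type*} [Preorder α] [Preorder β] (f : α → β)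
    (hf : StrictMono f) : olen α ≤ olen β :=
  olen_le fun p => length_le_olen (p.map f hf)

lemma olen_eq_of_orderIso {α β : Type*} [Preorder α] [Preorder β] (f : α ≃o β) :
    olen α = olen β := by
  rw [olen, olen, Order.krullDim_eq_of_orderIso f]

lemma olen_icc_self {α : Type*} [PartialOrder α] (a : α) : olen (Set.Icc a a) = 0 := by
  have : Unique (Set.Icc a a) :=
    ⟨⟨⟨a, le_refl a, le_refl a⟩⟩, fun x => Subtype.ext (le_antisymm x.2.2 x.2.1)⟩
  rw [olen, Order.krullDim_eq_zero_of_unique]; rfl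

lemma qlen_eq {A : Type*} [CommRing A] (N P : Ideal A) :
    (Order.krullDim (Submodule A (↥N ⧸ (Submodule.comap N.subtype P)))).unbotD 0
      = olen (Set.Icc (P ⊓ N) N) := by
  set pN : Submodule A ↥N := Submodule.comap N.subtype P with hpN
  apply le_antisymm
  · refine olen_le_of_strictMono
      (fun T => (⟨Submodule.map N.subtype (Submodule.comap pN.mkQ T), ?_, ?_⟩ :
        Set.Icc (P ⊓ N) N)) ?_
    · have h1 : pN ≤ Submodule.comap pN.mkQ T := by
        intro x hx
        have hz : pN.mkQ x = 0 := by
          rw [Submodule.mkQ_apply]; exact (Submodule.Quotient.mk_eq_zero pN).mpr hx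
        show pN.mkQ x ∈ T
        rw [hz]; exact T.zero_mem
      calc P ⊓ N = N ⊓ P := inf_comm P N
        _ = Submodule.map N.subtype pN := (Submodule.map_comap_subtype N P).symm
        _ ≤ _ := Submodule.map_mono h1
    · exact Submodule.map_subtype_le N _
    · intro T T' hTT'
      refine Subtype.mk_lt_mk.mpr ?_
      have hmono : Monotone (fun T : Submodule A (↥N ⧸ pN) =>
          Submodule.map N.subtype (Submodule.comap pN.mkQ T)) :=
        fun x y h => Submodule.map_mono (Submodule.comap_mono h)
      have hinj : Function.Injective (fun T : Submodule A (↥N ⧸ pN) =>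
          Submodule.map N.subtype (Submodule.comap pN.mkQ T)) := by
        intro x y h
        exact Submodule.comap_injective_of_surjective (Submodule.mkQ_surjective pN)
          (Submodule.map_injective_of_injective N.injective_subtype h)
      exact hmono.strictMono_of_injective hinj hTT'
  · refine olen_le_of_strictMono
      (fun S => Submodule.map pN.mkQ (Submodule.comap N.subtype S.1)) ?_
    have hmono : Monotone (fun S : Set.Icc (P ⊓ N) N =>
        Submodule.map pN.mkQ (Submodule.comap N.subtype S.1)) :=
      fun x y h => Submodule.map_mono (Submodule.comap_mono h)
    refine hmono.strictMono_of_injective ?_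
    intro x y h
    have h' : Submodule.map pN.mkQ (Submodule.comap N.subtype x.1)
        = Submodule.map pN.mkQ (Submodule.comap N.subtype y.1) := h
    have key : ∀ S : Set.Icc (P ⊓ N) N, pN ≤ Submodule.comap N.subtype S.1 := by
      intro S z hz
      have : (z : A) ∈ P ⊓ N := ⟨hz, z.2⟩
      exact S.2.1 this
    have hx := Submodule.comap_map_eq pN.mkQ (Submodule.comap N.subtype x.1)
    have hy := Submodule.comap_map_eq pN.mkQ (Submodule.comap N.subtype y.1)
    rw [Submodule.ker_mkQ, sup_of_le_left (key x)] at hx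
    rw [Submodule.ker_mkQ, sup_of_le_left (key y)] at hy
    have h2 : Submodule.comap N.subtype x.1 = Submodule.comap N.subtype y.1 := by
      rw [← hx, ← hy]
      exact congrArg (Submodule.comap pN.mkQ) h'
    have h3 := congrArg (Submodule.map N.subtype) h2
    rw [Submodule.map_comap_subtype, Submodule.map_comap_subtype] at h3
    apply Subtype.ext
    rw [← inf_of_le_right x.2.2, ← inf_of_le_right y.2.2]
    exact h3

lemma olen_icc_le_add {L : Type*} [Lattice L] [IsModularLattice L] {a b c : L}
    (hab : a ≤ b) (hbc : b ≤ c) :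
    olen (Set.Icc a c) ≤ olen (Set.Icc a b) + olen (Set.Icc b c) := by
  refine olen_le fun p => ?_
  set φ : Set.Icc a c → Set.Icc a b := fun x => ⟨x.1 ⊓ b, le_inf x.2.1 hab, inf_le_right⟩ with hφdef
  set ψ : Set.Icc a c → Set.Icc b c := fun x => ⟨x.1 ⊔ b, le_sup_right, sup_le x.2.2 hbc⟩ with hψdef
  have hφ : Monotone φ := fun x y h => Subtype.mk_le_mk.mpr (inf_le_inf_right b (Subtype.coe_le_coe.mpr h))
  have hψ : Monotone ψ := fun x y h => Subtype.mk_le_mk.mpr (sup_le_sup_right (Subtype.coe_le_coe.mpr h) b)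
  have key : ∀ x y : Set.Icc a c, x < y → φ x < φ y ∨ ψ x < ψ y := by
    intro x y hxy
    by_contra hcon
    push_neg at hcon
    have e1 : φ x = φ y := ((hφ hxy.le).lt_or_eq).resolve_left hcon.1
    have e2 : ψ x = ψ y := ((hψ hxy.le).lt_or_eq).resolve_left hcon.2
    have e1' : y.1 ⊓ b ≤ x.1 ⊓ b := le_of_eq (congrArg Subtype.val e1.symm)
    have e2' : y.1 ⊔ b ≤ x.1 ⊔ b := le_of_eq (congrArg Subtype.val e2.symm)
    exact hxy.ne (Subtype.ext (eq_of_le_of_inf_le_of_sup_le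
      (Subtype.coe_le_coe.mpr hxy.le) e1' e2'))
  have ind : ∀ i : ℕ, ∀ hi : i < p.length + 1,
      (i : ℕ∞) ≤ Order.height (φ (p ⟨i, hi⟩)) + Order.height (ψ (p ⟨i, hi⟩)) := by
    intro i
    induction i with
    | zero => intro hi; simp
    | succ j ihj =>
      intro hi
      have hj : j < p.length + 1 := Nat.lt_of_succ_lt hi
      have hjp : j < p.length := Nat.succ_lt_succ_iff.mp hi
      have hlt : p ⟨j, hj⟩ < p ⟨j + 1, hi⟩ := p.step ⟨j, hjp⟩
      have hcast : ((j + 1 : ℕ) : ℕ∞) = (j : ℕ∞) + 1 := by push_cast; ring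
      rcases key _ _ hlt with hl | hl
      · have hm : Order.height (ψ (p ⟨j, hj⟩)) ≤ Order.height (ψ (p ⟨j + 1, hi⟩)) :=
          Order.height_mono (hψ hlt.le)
        by_cases htop : Order.height (φ (p ⟨j, hj⟩)) = ⊤
        · have h1 : Order.height (φ (p ⟨j + 1, hi⟩)) = ⊤ :=
            top_le_iff.mp (htop ▸ Order.height_mono (hφ hlt.le))
          rw [h1, top_add]
          exact le_top
        · have h1 : Order.height (φ (p ⟨j, hj⟩)) + 1 ≤ Order.height (φ (p ⟨j + 1, hi⟩)) :=
            (ENat.add_one_le_iff htop).mpr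
              (Order.height_strictMono hl (lt_top_iff_ne_top.mpr htop))
          calc ((j + 1 : ℕ) : ℕ∞) = (j : ℕ∞) + 1 := hcast
            _ ≤ (Order.height (φ (p ⟨j, hj⟩)) + Order.height (ψ (p ⟨j, hj⟩))) + 1 :=
                add_le_add_left (ihj hj) 1
            _ = (Order.height (φ (p ⟨j, hj⟩)) + 1) + Order.height (ψ (p ⟨j, hj⟩)) := by ring
            _ ≤ _ := add_le_add h1 hm
      · have hm : Order.height (φ (p ⟨j, hj⟩)) ≤ Order.height (φ (p ⟨j + 1, hi⟩)) :=
          Order.height_mono (hφ hlt.le)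
        by_cases htop : Order.height (ψ (p ⟨j, hj⟩)) = ⊤
        · have h1 : Order.height (ψ (p ⟨j + 1, hi⟩)) = ⊤ :=
            top_le_iff.mp (htop ▸ Order.height_mono (hψ hlt.le))
          rw [h1, add_top]
          exact le_top
        · have h1 : Order.height (ψ (p ⟨j, hj⟩)) + 1 ≤ Order.height (ψ (p ⟨j + 1, hi⟩)) :=
            (ENat.add_one_le_iff htop).mpr
              (Order.height_strictMono hl (lt_top_iff_ne_top.mpr htop))
          calc ((j + 1 : ℕ) : ℕ∞) = (j : ℕ∞) + 1 := hcast
            _ ≤ (Order.height (φ (p ⟨j, hj⟩)) + Order.height (ψ (p ⟨j, hj⟩))) + 1 :=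
                add_le_add_left (ihj hj) 1
            _ = Order.height (φ (p ⟨j, hj⟩)) + (Order.height (ψ (p ⟨j, hj⟩)) + 1) := by ring
            _ ≤ _ := add_le_add hm h1
  have hfin := ind p.length (Nat.lt_succ_self _)
  exact hfin.trans (add_le_add (height_le_olen _) (height_le_olen _))

lemma olen_icc_le_one {L : Type*} [PartialOrder L] {a b : L}
    (h : ∀ S, a ≤ S → S ≤ b → S = a ∨ S = b) : olen (Set.Icc a b) ≤ 1 := by
  refine olen_le fun p => ?_
  by_contra hlen
  push_neg at hlen
  have h2 : 2 ≤ p.length := by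
    by_contra hc
    push_neg at hc
    interval_cases hl : p.length <;> simp_all <;> exact absurd hlen (by norm_num)
  have l01 : p ⟨0, by omega⟩ < p ⟨1, by omega⟩ := p.strictMono (by rw [Fin.mk_lt_mk]; omega)
  have l12 : p ⟨1, by omega⟩ < p ⟨2, by omega⟩ := p.strictMono (by rw [Fin.mk_lt_mk]; omega)
  rcases h (p ⟨1, by omega⟩).1 (p ⟨1, by omega⟩).2.1 (p ⟨1, by omega⟩).2.2 with he | he
  · have : a ≤ (p ⟨0, by omega⟩).1 := (p ⟨0, by omega⟩).2.1
    have hlt : (p ⟨0, by omega⟩).1 < (p ⟨1, by omega⟩).1 := l01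
    rw [he] at hlt
    exact absurd (this.trans_lt hlt) (lt_irrefl a)
  · have : (p ⟨2, by omega⟩).1 ≤ b := (p ⟨2, by omega⟩).2.2
    have hlt : (p ⟨1, by omega⟩).1 < (p ⟨2, by omega⟩).1 := l12
    rw [he] at hlt
    exact absurd (hlt.trans_le this) (lt_irrefl b)

lemma of_olen_icc_eq_one {L : Type*} [PartialOrder L] {a b : L} (hab : a ≤ b)
    (h : olen (Set.Icc a b) = 1) :
    a ≠ b ∧ ∀ S, a ≤ S → S ≤ b → S = a ∨ S = b := by
  constructor
  · intro he
    subst he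
    rw [olen_icc_self] at h
    norm_num at h
  · intro S hS1 hS2
    by_contra hcon
    push_neg at hcon
    have haS : a < S := hS1.lt_of_ne (Ne.symm hcon.1)
    have hSb : S < b := hS2.lt_of_ne hcon.2
    have hmem : ∀ x : L, a ≤ x → x ≤ b → x ∈ Set.Icc a b := fun x h1 h2 => ⟨h1, h2⟩
    set p : LTSeries (Set.Icc a b) :=
      ((RelSeries.singleton {(x, y) : Set.Icc a b × Set.Icc a b | x < y} (⟨b, hmem b hab le_rfl⟩ : Set.Icc a b)).cons
        ⟨S, hmem S hS1 hS2⟩ (show (⟨S, hmem S hS1 hS2⟩ : Set.Icc a b) < ⟨b, hmem b hab le_rfl⟩ from Subtype.mk_lt_mk.mpr hSb)).cons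
        ⟨a, hmem a le_rfl hab⟩ (by
          show (⟨a, hmem a le_rfl hab⟩ : Set.Icc a b) < ⟨S, hmem S hS1 hS2⟩
          exact Subtype.mk_lt_mk.mpr haS) with hp
    have := length_le_olen p
    have hlen2 : p.length = 2 := rfl
    rw [h, hlen2] at this
    norm_num at this

open IsLocalRing in
lemma nak {A : Type*} [CommRing A] [IsLocalRing A] [IsNoetherianRing A] {N N' : Ideal A}
    (h : N ≤ maximalIdeal A * N ⊔ N') : N ≤ N' := by
  refine Submodule.le_of_le_smul_of_le_jacobson_bot (I := maximalIdeal A) (IsNoetherian.noetherian N) ?_ ?_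
  · rw [IsLocalRing.jacobson_eq_maximalIdeal ⊥ bot_ne_top]
  · rwa [Ideal.smul_eq_mul, sup_comm]

open IsLocalRing in
theorem stretched_aux {A : Type*} [CommRing A] [IsLocalRing A] [IsNoetherianRing A]
    (I Q : Ideal A) (hIm : I.radical = maximalIdeal A)
    (hQI : Q ≤ I) (hred : ∃ n, I ^ (n + 1) = Q * I ^ n)
    (hstr1 : Q ⊓ I ^ 2 = Q * I) (hstr2 : qlen (I ^ 2 ⊔ Q) (I ^ 3 ⊔ Q) = 1) :
    qlen (I ^ 2) (Q * I ^ 1) = qlen (I ^ 2 ⊔ Q) Q ∧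
    qlen (I ^ 2) (Q * I ^ 1) = ((nidx I Q - 1 : ℕ) : ℕ∞) := by
  have qlen_eq' : ∀ N P : Ideal A, qlen N P = olen (Set.Icc (P ⊓ N) N) := fun N P => qlen_eq N P
  -- basic facts
  have hItop : I ≠ ⊤ := by
    intro h
    rw [h, Ideal.radical_top] at hIm
    exact (maximalIdeal.isMaximal A).ne_top hIm.symm
  have hIle : I ≤ maximalIdeal A := le_maximalIdeal hItop
  -- the interval (I^3+Q, I^2+Q)
  have h32 : I ^ 3 ⊔ Q ≤ I ^ 2 ⊔ Q := sup_le_sup_right (Ideal.pow_le_pow_right (by omega)) Q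
  have hstr2' : olen (Set.Icc (I ^ 3 ⊔ Q) (I ^ 2 ⊔ Q)) = 1 := by
    rw [qlen_eq', inf_of_le_left h32] at hstr2
    exact hstr2
  obtain ⟨hne32, hbetween⟩ := of_olen_icc_eq_one h32 hstr2'
  -- choose u v ∈ I with u*v ∉ I^3 ⊔ Q
  have hmulnle : ¬ (I * I ≤ I ^ 3 ⊔ Q) := by
    intro hle
    apply hne32
    refine le_antisymm h32 (sup_le ?_ le_sup_right)
    rw [pow_two]
    exact hle.trans le_rfl |>.trans (le_refl _) |>.trans (le_refl _) |>.trans le_rfl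
  obtain ⟨u, hu, v, hv, huv⟩ : ∃ u ∈ I, ∃ v ∈ I, u * v ∉ I ^ 3 ⊔ Q := by
    by_contra hc
    push_neg at hc
    exact hmulnle (Ideal.mul_le.mpr hc)
  have huvI2 : u * v ∈ I ^ 2 := by rw [pow_two]; exact Ideal.mul_mem_mul hu hv
  have hb2 : Ideal.span {u * v} ⊔ (I ^ 3 ⊔ Q) = I ^ 2 ⊔ Q := by
    rcases hbetween (Ideal.span {u * v} ⊔ (I ^ 3 ⊔ Q)) le_sup_right
      (sup_le ((Ideal.span_le.mpr (Set.singleton_subset_iff.mpr huvI2)).trans le_sup_left) h32)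
      with he | he
    · exact absurd (he ▸ (le_sup_left : Ideal.span {u * v} ≤ _)
        (Ideal.mem_span_singleton_self _)) huv
    · exact he
  -- m * (I^2 ⊔ Q) ≤ I^3 ⊔ Q
  have hmb : maximalIdeal A * (I ^ 2 ⊔ Q) ≤ I ^ 3 ⊔ Q := by
    by_contra hcon
    obtain ⟨z, hz, x, hx, hzx⟩ : ∃ z ∈ maximalIdeal A, ∃ x ∈ I ^ 2 ⊔ Q,
        z * x ∉ I ^ 3 ⊔ Q := by
      by_contra hc
      push_neg at hc
      exact hcon (Ideal.mul_le.mpr hc)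
    have hspan : Ideal.span {z * x} ⊔ (I ^ 3 ⊔ Q) = I ^ 2 ⊔ Q := by
      rcases hbetween (Ideal.span {z * x} ⊔ (I ^ 3 ⊔ Q)) le_sup_right
        (sup_le (Ideal.span_le.mpr (Set.singleton_subset_iff.mpr
          (Ideal.mul_mem_left _ z hx))) h32) with he | he
      · exact absurd (he ▸ (le_sup_left : Ideal.span {z * x} ≤ _)
          (Ideal.mem_span_singleton_self _)) hzx
      · exact he
    have hble : I ^ 2 ⊔ Q ≤ maximalIdeal A * (I ^ 2 ⊔ Q) ⊔ (I ^ 3 ⊔ Q) := by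
      calc I ^ 2 ⊔ Q = Ideal.span {z * x} ⊔ (I ^ 3 ⊔ Q) := hspan.symm
        _ ≤ maximalIdeal A * (I ^ 2 ⊔ Q) ⊔ (I ^ 3 ⊔ Q) := by
            refine sup_le_sup_right ?_ _
            rw [Ideal.span_le, Set.singleton_subset_iff]
            exact Ideal.mul_mem_mul hz hx
    exact hne32 (le_antisymm h32 (nak hble))
  have hmI2 : maximalIdeal A * I ^ 2 ≤ I ^ 3 ⊔ Q :=
    (Ideal.mul_mono_right le_sup_left).trans hmb
  -- key induction: I^(j+2) + Q = (u v^(j+1)) + I^(j+3) + Q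
  have hbase : I ^ 2 ≤ Ideal.span {u * v} ⊔ (I ^ 3 ⊔ Q) := le_sup_left.trans hb2.ge
  have key : ∀ j : ℕ, I ^ (j + 2) ⊔ Q = Ideal.span {u * v ^ (j + 1)} ⊔ (I ^ (j + 3) ⊔ Q) := by
    intro j
    induction j with
    | zero => rw [pow_one]; exact hb2.symm
    | succ n ih =>
      apply le_antisymm
      · refine sup_le ?_ ((le_sup_right : Q ≤ I ^ (n + 4) ⊔ Q).trans le_sup_right)
        have hps : I ^ (n + 3) = I ^ (n + 2) * I := pow_succ I (n + 2)
        rw [hps]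
        calc I ^ (n + 2) * I ≤ (I ^ (n + 2) ⊔ Q) * I := Ideal.mul_mono_left le_sup_left
          _ = (Ideal.span {u * v ^ (n + 1)} ⊔ (I ^ (n + 3) ⊔ Q)) * I := by rw [ih]
          _ = Ideal.span {u * v ^ (n + 1)} * I ⊔ (I ^ (n + 3) * I ⊔ Q * I) := by
              rw [Ideal.sup_mul, Ideal.sup_mul]
          _ ≤ Ideal.span {u * v ^ (n + 2)} ⊔ (I ^ (n + 4) ⊔ Q) := by
              refine sup_le ?_ (sup_le ?_ ?_)
              · refine Ideal.mul_le.mpr ?_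
                intro s hs c hc
                rw [Ideal.mem_span_singleton] at hs
                obtain ⟨t, rfl⟩ := hs
                have hcu : c * u ∈ Ideal.span {u * v} ⊔ (I ^ 3 ⊔ Q) := by
                  apply hbase
                  rw [pow_two]
                  exact Ideal.mul_mem_mul hc hu
                rw [Submodule.mem_sup] at hcu
                obtain ⟨p, hp, w, hw, hpw⟩ := hcu
                rw [Ideal.mem_span_singleton] at hp
                obtain ⟨r, rfl⟩ := hp
                have heq : u * v ^ (n + 1) * t * c
                    = (u * v ^ (n + 2)) * (r * t) + (v ^ (n + 1) * w) * t := by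
                  have hc' : c * u = u * v * r + w := hpw.symm
                  calc u * v ^ (n + 1) * t * c = (c * u) * (v ^ (n + 1) * t) := by ring
                    _ = (u * v * r + w) * (v ^ (n + 1) * t) := by rw [hc']
                    _ = (u * v ^ (n + 2)) * (r * t) + (v ^ (n + 1) * w) * t := by ring
                rw [heq]
                refine Submodule.add_mem _ ?_ ?_
                · exact Submodule.mem_sup_left (Ideal.mem_span_singleton.mpr ⟨r * t, rfl⟩)
                · refine Submodule.mem_sup_right ?_
                  refine Ideal.mul_mem_right t _ ?_
                  rw [Submodule.mem_sup] at hw ⊢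
                  obtain ⟨w1, hw1, w2, hw2, rfl⟩ := hw
                  refine ⟨v ^ (n + 1) * w1, ?_, v ^ (n + 1) * w2,
                    Ideal.mul_mem_left _ _ hw2, by ring⟩
                  have hvp : v ^ (n + 1) ∈ I ^ (n + 1) := Ideal.pow_mem_pow hv _
                  have h4 : I ^ (n + 1) * I ^ 3 = I ^ (n + 4) := by rw [← pow_add]
                  exact h4 ▸ Ideal.mul_mem_mul hvp hw1
              · calc I ^ (n + 3) * I = I ^ (n + 4) := (pow_succ I (n + 3)).symm
                  _ ≤ _ := le_sup_left.trans le_sup_right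
              · exact Ideal.mul_le_left.trans (le_sup_right.trans le_sup_right)
      · refine sup_le ?_ (sup_le ?_ le_sup_right)
        · refine (Ideal.span_le.mpr (Set.singleton_subset_iff.mpr ?_)).trans le_sup_left
          rw [pow_succ']
          exact Ideal.mul_mem_mul hu (Ideal.pow_mem_pow hv _)
        · exact (Ideal.pow_le_pow_right (by omega)).trans le_sup_left
  -- m I^(j+2) ≤ I^(j+3) + Q
  have hmk : ∀ j : ℕ, maximalIdeal A * I ^ (j + 2) ≤ I ^ (j + 3) ⊔ Q := by
    intro j
    have h1 : I ^ (j + 2) = I ^ 2 * I ^ j := by rw [← pow_add, Nat.add_comm 2 j]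
    calc maximalIdeal A * I ^ (j + 2) = (maximalIdeal A * I ^ 2) * I ^ j := by
          rw [h1, mul_assoc]
      _ ≤ (I ^ 3 ⊔ Q) * I ^ j := Ideal.mul_mono_left hmI2
      _ = I ^ 3 * I ^ j ⊔ Q * I ^ j := by rw [Ideal.sup_mul]
      _ ≤ I ^ (j + 3) ⊔ Q := by
          refine sup_le ?_ (Ideal.mul_le_left.trans le_sup_right)
          rw [← pow_add, Nat.add_comm 3 j]
          exact le_sup_left
  -- each layer is simple or trivial
  have hlayer : ∀ j : ℕ, olen (Set.Icc (I ^ (j + 3) ⊔ Q) (I ^ (j + 2) ⊔ Q)) ≤ 1 := by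
    intro j
    apply olen_icc_le_one
    intro S hS1 hS2
    by_cases hSa : S = I ^ (j + 3) ⊔ Q
    · exact Or.inl hSa
    right
    obtain ⟨x, hxS, hxa⟩ : ∃ x ∈ S, x ∉ I ^ (j + 3) ⊔ Q := by
      by_contra hc
      push_neg at hc
      exact hSa (le_antisymm hc hS1)
    have hxb : x ∈ Ideal.span {u * v ^ (j + 1)} ⊔ (I ^ (j + 3) ⊔ Q) := by
      rw [← key j]
      exact hS2 hxS
    rw [Submodule.mem_sup] at hxb
    obtain ⟨p, hp, w, hw, hpw⟩ := hxb
    rw [Ideal.mem_span_singleton'] at hp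
    obtain ⟨r, rfl⟩ := hp
    have huv2 : u * v ^ (j + 1) ∈ I ^ (j + 2) := by
      rw [pow_succ']
      exact Ideal.mul_mem_mul hu (Ideal.pow_mem_pow hv _)
    have hrm : r ∉ maximalIdeal A := by
      intro hr
      apply hxa
      have h1 : r * (u * v ^ (j + 1)) ∈ I ^ (j + 3) ⊔ Q :=
        hmk j (Ideal.mul_mem_mul hr huv2)
      rw [← hpw]
      exact Submodule.add_mem _ h1 hw
    have hrunit : IsUnit r := IsLocalRing.notMem_maximalIdeal.mp hrm
    have hyS : u * v ^ (j + 1) ∈ S := by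
      have h1 : r * (u * v ^ (j + 1)) ∈ S := by
        have heq : r * (u * v ^ (j + 1)) = x - w := by rw [← hpw]; ring
        rw [heq]
        exact Submodule.sub_mem _ hxS (hS1 hw)
      obtain ⟨q, hq⟩ := hrunit.exists_left_inv
      have h2 := S.mul_mem_left q h1
      rwa [← mul_assoc, hq, one_mul] at h2
    apply le_antisymm hS2
    rw [key j]
    exact sup_le (Ideal.span_le.mpr (Set.singleton_subset_iff.mpr hyS)) hS1
  -- facts about nidx
  set nI := nidx I Q with hnIdef
  have hSetne : {n : ℕ | I ^ (n + 1) ≤ Q}.Nonempty := by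
    obtain ⟨n, hn⟩ := hred
    refine ⟨n, ?_⟩
    show I ^ (n + 1) ≤ Q
    rw [hn]
    exact Ideal.mul_le_left
  have hNmem : I ^ (nI + 1) ≤ Q := Nat.sInf_mem hSetne
  have hNlt : ∀ k, k < nI → ¬ I ^ (k + 1) ≤ Q := fun k hk => Nat.notMem_of_lt_sInf hk
  have hI2Q : ¬ I ^ 2 ≤ Q := by
    intro h
    have e1 : I ^ 2 ⊔ Q = Q := sup_eq_right.mpr h
    have e2 : I ^ 3 ⊔ Q = Q := sup_eq_right.mpr ((Ideal.pow_le_pow_right (by omega)).trans h)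
    rw [e1, e2, olen_icc_self] at hstr2'
    norm_num at hstr2'
  have h2N : 2 ≤ nI := by
    by_contra hc
    push_neg at hc
    exact hI2Q ((Ideal.pow_le_pow_right (by omega : nI + 1 ≤ 2)).trans hNmem)
  have hstrict : ∀ k, 2 ≤ k → k ≤ nI → I ^ (k + 1) ⊔ Q < I ^ k ⊔ Q := by
    intro k hk2 hk
    refine lt_of_le_of_ne (sup_le_sup_right (Ideal.pow_le_pow_right (Nat.le_succ k)) Q) ?_
    intro he
    have h1 : I ^ k ≤ maximalIdeal A * I ^ k ⊔ Q := by
      have ha : I ^ k ≤ I ^ (k + 1) ⊔ Q := le_sup_left.trans he.ge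
      refine ha.trans (sup_le_sup_right ?_ Q)
      rw [pow_succ']
      exact Ideal.mul_mono_left hIle
    have h2' : I ^ k ≤ Q := nak h1
    exact hNlt (k - 1) (by omega) (by rwa [Nat.sub_add_cancel (by omega)])
  -- upper bound
  have hupper : ∀ j : ℕ, olen (Set.Icc (I ^ (j + 2) ⊔ Q) (I ^ 2 ⊔ Q)) ≤ (j : ℕ∞) := by
    intro j
    induction j with
    | zero => simp [olen_icc_self]
    | succ n ih =>
      have hle1 : I ^ (n + 3) ⊔ Q ≤ I ^ (n + 2) ⊔ Q :=
        sup_le_sup_right (Ideal.pow_le_pow_right (by omega)) Q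
      have hle2 : I ^ (n + 2) ⊔ Q ≤ I ^ 2 ⊔ Q :=
        sup_le_sup_right (Ideal.pow_le_pow_right (by omega)) Q
      calc olen (Set.Icc (I ^ (n + 3) ⊔ Q) (I ^ 2 ⊔ Q))
          ≤ olen (Set.Icc (I ^ (n + 3) ⊔ Q) (I ^ (n + 2) ⊔ Q))
            + olen (Set.Icc (I ^ (n + 2) ⊔ Q) (I ^ 2 ⊔ Q)) := olen_icc_le_add hle1 hle2
        _ ≤ 1 + (n : ℕ∞) := add_le_add (hlayer n) ih
        _ = ((n + 1 : ℕ) : ℕ∞) := by push_cast; ring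
  have hQeq : I ^ (nI + 1) ⊔ Q = Q := sup_eq_right.mpr hNmem
  have hup : olen (Set.Icc Q (I ^ 2 ⊔ Q)) ≤ ((nI - 1 : ℕ) : ℕ∞) := by
    have h := hupper (nI - 1)
    rw [show nI - 1 + 2 = nI + 1 by omega, hQeq] at h
    exact h
  -- lower bound
  have hmemIcc : ∀ i : ℕ, i ≤ nI - 1 → I ^ (nI + 1 - i) ⊔ Q ∈ Set.Icc Q (I ^ 2 ⊔ Q) :=
    fun i hi => ⟨le_sup_right, sup_le_sup_right (Ideal.pow_le_pow_right (by omega)) Q⟩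
  have hlow : ((nI - 1 : ℕ) : ℕ∞) ≤ olen (Set.Icc Q (I ^ 2 ⊔ Q)) := by
    set p : LTSeries (Set.Icc Q (I ^ 2 ⊔ Q)) :=
      { length := nI - 1
        toFun := fun i => ⟨I ^ (nI + 1 - (i : ℕ)) ⊔ Q, hmemIcc (i : ℕ) (by omega)⟩
        step := fun i => by
          have hi : (i : ℕ) < nI - 1 := i.2
          show (_ : Set.Icc Q (I ^ 2 ⊔ Q)) < _
          refine Subtype.mk_lt_mk.mpr ?_
          have e1 : ((i.castSucc : Fin (nI - 1 + 1)) : ℕ) = (i : ℕ) := rfl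
          have e2 : ((i.succ : Fin (nI - 1 + 1)) : ℕ) = (i : ℕ) + 1 := rfl
          rw [e1, e2, show nI + 1 - ((i : ℕ) + 1) = nI - (i : ℕ) from by omega,
            show nI + 1 - (i : ℕ) = (nI - (i : ℕ)) + 1 from by omega]
          exact hstrict (nI - (i : ℕ)) (by omega) (by omega) } with hpdef
    have h := length_le_olen p
    exact h
  have hmain : olen (Set.Icc Q (I ^ 2 ⊔ Q)) = ((nI - 1 : ℕ) : ℕ∞) := le_antisymm hup hlow
  have e2 : qlen (I ^ 2 ⊔ Q) Q = olen (Set.Icc Q (I ^ 2 ⊔ Q)) := by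
    rw [qlen_eq' (I ^ 2 ⊔ Q) Q, inf_of_le_left (le_sup_right : Q ≤ I ^ 2 ⊔ Q)]
  have e1 : qlen (I ^ 2) (Q * I ^ 1) = olen (Set.Icc Q (I ^ 2 ⊔ Q)) := by
    rw [qlen_eq' (I ^ 2) (Q * I ^ 1)]
    have h1 : Q * I ^ 1 ⊓ I ^ 2 = I ^ 2 ⊓ Q := by
      rw [pow_one, ← hstr1, inf_of_le_left (inf_le_right : Q ⊓ I ^ 2 ≤ I ^ 2), inf_comm]
    rw [h1]
    exact olen_eq_of_orderIso (infIccOrderIsoIccSup (I ^ 2) Q)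
  exact ⟨e1.trans e2.symm, e1.trans hmain⟩

theorem stretched_alpha_one_eq_nidx_sub_one {A : Type*} [CommRing A] [IsLocalRing A] [IsNoetherianRing A]
    [Infinite (ResidueField A)]
    (d : ℕ) (hd : 0 < d) (hdim : ringKrullDim A = d)
    (hCMring : seqDepth (maximalIdeal A) A = d)
    (I Q : Ideal A) (hIm : I.radical = maximalIdeal A)
    (a : Fin d → A) (hQa : Q = Ideal.span (Set.range a))
    (hQI : Q ≤ I) (hred : ∃ n, I ^ (n + 1) = Q * I ^ n)
    (hstr : IsStretched I Q) :
    qlen (I ^ 2) (Q * I ^ 1) = qlen (I ^ 2 ⊔ Q) Q ∧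
    qlen (I ^ 2) (Q * I ^ 1) = ((nidx I Q - 1 : ℕ) : ℕ∞) := by
  exact stretched_aux I Q hIm hQI hred hstr.1 hstr.2
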